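/- Let G be a k-regular finite simple connected super-λ'' graph with k ≥ 4 whose girth is at least 4. Then G is super-λ' and ρ'(G) = k − 1. -/

import Mathlib

open SimpleGraph

variable {V : Type*}

/-- The degree of a vertex, as the cardinality of its neighbor set. -/
noncomputable def degN (G : SimpleGraph V) (v : V) : ℕ := (G.neighborSet v).ncard

/-- The minimum degree `δ(G)`. -/
noncomputable def minDeg (G : SimpleGraph V) : ℕ := sInf {k | ∃ v, degN G v = k}

/-- `d_G(X)`: the number of edges of `G` with exactly one endpoint in `X`. -/
noncomputable def dOut (G : SimpleGraph V) (X : Set V) : ℕ :=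
  {e ∈ G.edgeSet | ∃ x ∈ X, ∃ y ∈ Xᶜ, e = s(x, y)}.ncard

/-- `F` is an `h`-extra edge-cut of `G`: a set of edges of `G` whose removal disconnects `G`
and such that every connected component of `G - F` has more than `h` vertices. -/
def IsExtraEdgeCut (G : SimpleGraph V) (h : ℕ) (F : Set (Sym2 V)) : Prop :=
  F ⊆ G.edgeSet ∧ ¬(G.deleteEdges F).Connected ∧
    ∀ c : (G.deleteEdges F).ConnectedComponent, h < c.supp.ncard

/-- `G` is `λ^(h)`-connected: an `h`-extra edge-cut exists. -/
def LambdaConn (G : SimpleGraph V) (h : ℕ) : Prop := ∃ F, IsExtraEdgeCut G h F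

/-- The `h`-extra edge-connectivity `λ^(h)(G)`: the minimum cardinality of an
`h`-extra edge-cut. -/
noncomputable def lambdaH (G : SimpleGraph V) (h : ℕ) : ℕ :=
  sInf {k | ∃ F, IsExtraEdgeCut G h F ∧ F.ncard = k}

/-- `ξ_h(G)`: the minimum of `d_G(X)` over vertex sets `X` of size `h + 1` inducing a
connected subgraph. -/
noncomputable def xiH (G : SimpleGraph V) (h : ℕ) : ℕ :=
  sInf {k | ∃ X : Set V, X.ncard = h + 1 ∧ (G.induce X).Connected ∧ dOut G X = k}

/-- `G` is super-`λ^(h)`: it is connected, `λ^(h)`-connected, `λ^(h)`-optimal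
(`λ^(h)(G) = ξ_h(G)`), and every minimum `h`-extra edge-cut leaves a component with
exactly `h + 1` vertices. -/
def SuperLambda (G : SimpleGraph V) (h : ℕ) : Prop :=
  G.Connected ∧ LambdaConn G h ∧ lambdaH G h = xiH G h ∧
    ∀ F : Set (Sym2 V), IsExtraEdgeCut G h F → F.ncard = lambdaH G h →
      ∃ c : (G.deleteEdges F).ConnectedComponent, c.supp.ncard = h + 1

/-- The persistence `ρ^(h)(G)`: the largest `m` such that `G - F` is super-`λ^(h)` for
every set `F` of at most `m` edges of `G`. -/
noncomputable def rhoH (G : SimpleGraph V) (h : ℕ) : ℕ :=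
  sSup {m : ℕ | ∀ F : Set (Sym2 V), F ⊆ G.edgeSet → F.ncard ≤ m →
    SuperLambda (G.deleteEdges F) h}

/-- `ξ(G)`: the minimum edge-degree `deg x + deg y - 2` over the edges `xy` of `G`. -/
noncomputable def xiEdge (G : SimpleGraph V) : ℕ :=
  sInf {k | ∃ x y, G.Adj x y ∧ degN G x + degN G y - 2 = k}

/-- `η(G)`: the number of edges of `G` whose edge-degree equals `ξ(G)`. -/
noncomputable def eta (G : SimpleGraph V) : ℕ :=
  {e ∈ G.edgeSet | ∃ x y, e = s(x, y) ∧ degN G x + degN G y - 2 = xiEdge G}.ncard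

section Aux
open Classical
variable {V : Type*}

lemma walk_closed {G' : SimpleGraph V} {S : Set V}
    (hcl : ∀ a b, G'.Adj a b → a ∈ S → b ∈ S) :
    ∀ {u w : V}, G'.Walk u w → u ∈ S → w ∈ S := by
  intro u w p
  induction p with
  | nil => exact id
  | cons h p ih => intro hu; exact ih (hcl _ _ h hu)

lemma supp_closed {G' : SimpleGraph V} (c : G'.ConnectedComponent) {a b : V}
    (ha : a ∈ c.supp) (hab : G'.Adj a b) : b ∈ c.supp := by
  rw [ConnectedComponent.mem_supp_iff] at ha ⊢
  rw [← ha]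
  exact (ConnectedComponent.connectedComponentMk_eq_of_adj hab).symm

lemma supp_reach {G' : SimpleGraph V} (c : G'.ConnectedComponent) {a b : V}
    (ha : a ∈ c.supp) (hb : b ∈ c.supp) : G'.Reachable a b := by
  rw [ConnectedComponent.mem_supp_iff] at ha hb
  exact ConnectedComponent.exact (ha.trans hb.symm)

lemma supp_eq_of {G' : SimpleGraph V} {S : Set V} {v : V} (hv : v ∈ S)
    (hcl : ∀ a b, G'.Adj a b → a ∈ S → b ∈ S)
    (hre : ∀ w ∈ S, G'.Reachable v w) :
    (G'.connectedComponentMk v).supp = S := by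
  ext w
  constructor
  · intro hw
    rw [ConnectedComponent.mem_supp_iff] at hw
    obtain ⟨p⟩ := (ConnectedComponent.exact hw).symm
    exact walk_closed hcl p hv
  · intro hw
    rw [ConnectedComponent.mem_supp_iff]
    exact ConnectedComponent.sound (hre w hw).symm

lemma adj_of_conn_ne {G' : SimpleGraph V} (h : G'.Connected) {u w : V} (huw : u ≠ w) :
    ∃ x, G'.Adj u x := by
  obtain ⟨p⟩ := h.preconnected u w
  cases p with
  | nil => exact absurd rfl huw
  | cons h p => exact ⟨_, h⟩

lemma supp_mem_self {G' : SimpleGraph V} (v : V) : v ∈ (G'.connectedComponentMk v).supp := by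
  simp [ConnectedComponent.mem_supp_iff]

lemma not_connected_of {G' : SimpleGraph V} {v u : V} (h : u ∉ (G'.connectedComponentMk v).supp) :
    ¬ G'.Connected := by
  intro hc
  exact h (by rw [ConnectedComponent.mem_supp_iff]; exact ConnectedComponent.sound (hc.preconnected u v))

end Aux
section Aux2
variable {V : Type*} [Fintype V]

lemma degN_mono {G' G'' : SimpleGraph V} (h : G' ≤ G'') (v : V) : degN G' v ≤ degN G'' v :=
  Set.ncard_le_ncard (fun w hw => h hw) (Set.toFinite _)

lemma degN_deleteEdges {G : SimpleGraph V} {F : Set (Sym2 V)} (hF : F ⊆ G.edgeSet) (v : V) :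
    degN (G.deleteEdges F) v + {e ∈ F | v ∈ e}.ncard = degN G v := by
  classical
  have himg : {e ∈ F | v ∈ e} =
      (fun w => s(v, w)) '' (G.neighborSet v \ (G.deleteEdges F).neighborSet v) := by
    ext e
    constructor
    · rintro ⟨heF, hve⟩
      induction e with
      | _ a b =>
        have hadj : G.Adj a b := (G.mem_edgeSet).mp (hF heF)
        rcases Sym2.mem_iff.mp hve with rfl | rfl
        · exact ⟨b, ⟨hadj, fun hb => (SimpleGraph.deleteEdges_adj.mp hb).2 heF⟩, rfl⟩
        · refine ⟨a, ⟨hadj.symm, fun hb => (SimpleGraph.deleteEdges_adj.mp hb).2 ?_⟩, Sym2.eq_swap⟩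
          rwa [Sym2.eq_swap]
    · rintro ⟨w, ⟨hw1, hw2⟩, rfl⟩
      have : s(v, w) ∈ F := by
        by_contra hc
        exact hw2 (SimpleGraph.deleteEdges_adj.mpr ⟨hw1, hc⟩)
      exact ⟨this, Sym2.mem_mk_left v w⟩
  have hinj : Set.InjOn (fun w => s(v, w))
      (G.neighborSet v \ (G.deleteEdges F).neighborSet v) := by
    intro w hw w' _ hww'
    rcases Sym2.eq_iff.mp hww' with ⟨_, h⟩ | ⟨h1, h2⟩
    · exact h
    · exact absurd h2 (G.ne_of_adj hw.1).symm
  have hsub : (G.deleteEdges F).neighborSet v ⊆ G.neighborSet v :=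
    fun w hw => (SimpleGraph.deleteEdges_adj.mp hw).1
  have hcard := Set.ncard_diff_add_ncard_of_subset hsub (Set.toFinite _)
  rw [himg, Set.ncard_image_of_injOn hinj]
  unfold degN
  omega

end Aux2
section Bdry
variable {V : Type*}

/-- The boundary edge set of `X`. -/
def bdry (G' : SimpleGraph V) (X : Set V) : Set (Sym2 V) :=
  {e ∈ G'.edgeSet | ∃ x ∈ X, ∃ y ∈ Xᶜ, e = s(x, y)}

lemma dOut_def' (G' : SimpleGraph V) (X : Set V) : dOut G' X = (bdry G' X).ncard := rfl

lemma mem_bdry {G' : SimpleGraph V} {X : Set V} {a b : V} :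
    s(a, b) ∈ bdry G' X ↔ G'.Adj a b ∧ ((a ∈ X ∧ b ∉ X) ∨ (b ∈ X ∧ a ∉ X)) := by
  constructor
  · rintro ⟨he, x, hx, y, hy, hxy⟩
    refine ⟨G'.mem_edgeSet.mp he, ?_⟩
    rcases Sym2.eq_iff.mp hxy with ⟨rfl, rfl⟩ | ⟨rfl, rfl⟩
    · exact Or.inl ⟨hx, hy⟩
    · exact Or.inr ⟨hx, hy⟩
  · rintro ⟨ha, ⟨hx, hy⟩ | ⟨hx, hy⟩⟩
    · exact ⟨G'.mem_edgeSet.mpr ha, a, hx, b, hy, rfl⟩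
    · exact ⟨G'.mem_edgeSet.mpr ha, b, hx, a, hy, Sym2.eq_swap.symm⟩

lemma bdry_subset_edgeSet {G' : SimpleGraph V} {X : Set V} : bdry G' X ⊆ G'.edgeSet :=
  fun _ he => he.1

lemma bdry_eq_iUnion (G' : SimpleGraph V) (X : Set V) :
    bdry G' X = ⋃ x ∈ X, (fun w => s(x, w)) '' (G'.neighborSet x \ X) := by
  ext e
  induction e with
  | _ a b =>
    simp only [Set.mem_iUnion, Set.mem_image, Set.mem_diff, mem_neighborSet, mem_bdry]
    constructor
    · rintro ⟨hadj, ⟨hx, hy⟩ | ⟨hx, hy⟩⟩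
      · exact ⟨a, hx, b, ⟨hadj, hy⟩, rfl⟩
      · exact ⟨b, hx, a, ⟨hadj.symm, hy⟩, Sym2.eq_swap⟩
    · rintro ⟨x, hx, w, ⟨hadj, hw⟩, heq⟩
      rcases Sym2.eq_iff.mp heq.symm with ⟨rfl, rfl⟩ | ⟨rfl, rfl⟩
      · exact ⟨hadj, Or.inl ⟨hx, hw⟩⟩
      · exact ⟨hadj.symm, Or.inr ⟨hx, hw⟩⟩

lemma bdry_injOn (G' : SimpleGraph V) (x : V) (X : Set V) :
    Set.InjOn (fun w => s(x, w)) (G'.neighborSet x \ X) := by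
  intro w hw w' _ hww'
  rcases Sym2.eq_iff.mp hww' with ⟨_, h⟩ | ⟨h1, h2⟩
  · exact h
  · exact absurd h2 (G'.ne_of_adj hw.1).symm

lemma bdry_img_disj {x y : V} {X : Set V} (hx : x ∈ X) (hxy : x ≠ y) (A B : Set V) :
    Disjoint ((fun w => s(x, w)) '' (A \ X)) ((fun w => s(y, w)) '' (B \ X)) := by
  rw [Set.disjoint_left]
  rintro e ⟨w, hw, rfl⟩ ⟨w', hw', heq⟩
  rcases Sym2.eq_iff.mp heq with ⟨rfl, _⟩ | ⟨rfl, rfl⟩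
  · exact hxy rfl
  · exact hw'.2 hx

end Bdry
section Aux3
variable {V : Type*} [Fintype V]

lemma dOut_pair {G' : SimpleGraph V} {x y : V} (hxy : G'.Adj x y) :
    dOut G' {x, y} + 2 = degN G' x + degN G' y := by
  have hne := G'.ne_of_adj hxy
  have hU : bdry G' {x, y} = ((fun w => s(x, w)) '' (G'.neighborSet x \ {x, y})) ∪
      ((fun w => s(y, w)) '' (G'.neighborSet y \ {x, y})) := by
    rw [bdry_eq_iUnion]
    simp
  have h1 : G'.neighborSet x \ {x, y} = G'.neighborSet x \ {y} := by
    ext w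
    simp only [Set.mem_diff, mem_neighborSet, Set.mem_insert_iff, Set.mem_singleton_iff]
    constructor
    · rintro ⟨h, h2⟩; exact ⟨h, fun hh => h2 (Or.inr hh)⟩
    · rintro ⟨h, h2⟩
      exact ⟨h, by rintro (rfl | rfl); exacts [G'.irrefl h, h2 rfl]⟩
  have h2 : G'.neighborSet y \ {x, y} = G'.neighborSet y \ {x} := by
    ext w
    simp only [Set.mem_diff, mem_neighborSet, Set.mem_insert_iff, Set.mem_singleton_iff]
    constructor
    · rintro ⟨h, h2⟩; exact ⟨h, fun hh => h2 (Or.inl hh)⟩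
    · rintro ⟨h, h2⟩
      exact ⟨h, by rintro (rfl | rfl); exacts [h2 rfl, G'.irrefl h]⟩
  have hc1 := Set.ncard_diff_singleton_add_one (show y ∈ G'.neighborSet x from hxy)
    (Set.toFinite _)
  have hc2 := Set.ncard_diff_singleton_add_one (show x ∈ G'.neighborSet y from hxy.symm)
    (Set.toFinite _)
  rw [dOut_def', hU,
    Set.ncard_union_eq (bdry_img_disj (by simp) hne _ _) (Set.toFinite _) (Set.toFinite _),
    Set.ncard_image_of_injOn (bdry_injOn G' x _), Set.ncard_image_of_injOn (bdry_injOn G' y _),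
    h1, h2]
  unfold degN
  omega

end Aux3
set_option linter.unusedSectionVars false
section Aux4
variable {V : Type*} [Fintype V]

lemma dOut_triple {G' : SimpleGraph V} {x y z : V} (hxy : G'.Adj x y) (hyz : G'.Adj y z)
    (hxz : ¬ G'.Adj x z) (hxzne : x ≠ z) :
    dOut G' {x, y, z} + 4 = degN G' x + degN G' y + degN G' z := by
  have hxyne := G'.ne_of_adj hxy
  have hyzne := G'.ne_of_adj hyz
  have hU : bdry G' {x, y, z} = ((fun w => s(x, w)) '' (G'.neighborSet x \ {x, y, z})) ∪
      (((fun w => s(y, w)) '' (G'.neighborSet y \ {x, y, z})) ∪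
       ((fun w => s(z, w)) '' (G'.neighborSet z \ {x, y, z}))) := by
    rw [bdry_eq_iUnion]
    simp [Set.biUnion_insert, Set.union_assoc]
  have h1 : G'.neighborSet x \ {x, y, z} = G'.neighborSet x \ {y} := by
    ext w
    simp only [Set.mem_diff, mem_neighborSet, Set.mem_insert_iff, Set.mem_singleton_iff]
    constructor
    · rintro ⟨h, h2⟩; exact ⟨h, fun hh => h2 (Or.inr (Or.inl hh))⟩
    · rintro ⟨h, h2⟩
      exact ⟨h, by rintro (rfl | rfl | rfl); exacts [G'.irrefl h, h2 rfl, hxz h]⟩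
  have h2 : G'.neighborSet y \ {x, y, z} = (G'.neighborSet y \ {x}) \ {z} := by
    ext w
    simp only [Set.mem_diff, mem_neighborSet, Set.mem_insert_iff, Set.mem_singleton_iff]
    constructor
    · rintro ⟨h, h2⟩
      exact ⟨⟨h, fun hh => h2 (Or.inl hh)⟩, fun hh => h2 (Or.inr (Or.inr hh))⟩
    · rintro ⟨⟨h, ha⟩, hb⟩
      exact ⟨h, by rintro (rfl | rfl | rfl); exacts [ha rfl, G'.irrefl h, hb rfl]⟩
  have h3 : G'.neighborSet z \ {x, y, z} = G'.neighborSet z \ {y} := by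
    ext w
    simp only [Set.mem_diff, mem_neighborSet, Set.mem_insert_iff, Set.mem_singleton_iff]
    constructor
    · rintro ⟨h, h2⟩; exact ⟨h, fun hh => h2 (Or.inr (Or.inl hh))⟩
    · rintro ⟨h, h2⟩
      refine ⟨h, ?_⟩
      rintro (rfl | rfl | rfl)
      exacts [hxz h.symm, h2 rfl, G'.irrefl h]
  have hd1 : Disjoint ((fun w => s(x, w)) '' (G'.neighborSet x \ {x, y, z}))
      (((fun w => s(y, w)) '' (G'.neighborSet y \ {x, y, z})) ∪
       ((fun w => s(z, w)) '' (G'.neighborSet z \ {x, y, z}))) := by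
    refine Set.disjoint_union_right.mpr ⟨bdry_img_disj (by simp) hxyne _ _,
      bdry_img_disj (by simp) hxzne _ _⟩
  have hd2 : Disjoint ((fun w => s(y, w)) '' (G'.neighborSet y \ {x, y, z}))
      ((fun w => s(z, w)) '' (G'.neighborSet z \ {x, y, z})) :=
    bdry_img_disj (by simp) hyzne _ _
  have hc1 := Set.ncard_diff_singleton_add_one (show y ∈ G'.neighborSet x from hxy)
    (Set.toFinite _)
  have hc3 := Set.ncard_diff_singleton_add_one (show y ∈ G'.neighborSet z from hyz.symm)
    (Set.toFinite _)
  have hc2a := Set.ncard_diff_singleton_add_one (show x ∈ G'.neighborSet y from hxy.symm)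
    (Set.toFinite _)
  have hc2b := Set.ncard_diff_singleton_add_one
    (show z ∈ G'.neighborSet y \ {x} from ⟨hyz, fun hh => hxzne (by simpa using hh.symm)⟩)
    (Set.toFinite _)
  rw [dOut_def', hU, Set.ncard_union_eq hd1 (Set.toFinite _) (Set.toFinite _),
    Set.ncard_union_eq hd2 (Set.toFinite _) (Set.toFinite _),
    Set.ncard_image_of_injOn (bdry_injOn G' x _), Set.ncard_image_of_injOn (bdry_injOn G' y _),
    Set.ncard_image_of_injOn (bdry_injOn G' z _), h1, h2, h3]
  unfold degN
  omega

end Aux4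
section Aux5
variable {V : Type*}

lemma tri_free {G : SimpleGraph V} (hg : (4 : ℕ∞) ≤ G.egirth) {x y z : V}
    (hxy : G.Adj x y) (hyz : G.Adj y z) (hxz : x ≠ z) : ¬ G.Adj x z := by
  intro hadj
  have hxyne := G.ne_of_adj hxy
  have hyzne := G.ne_of_adj hyz
  set w : G.Walk x x := Walk.cons hxy (Walk.cons hyz (Walk.cons hadj.symm Walk.nil)) with hw
  have hcyc : w.IsCycle := by
    rw [Walk.isCycle_def]
    refine ⟨?_, by simp [hw], ?_⟩
    · rw [Walk.isTrail_def]
      simp only [hw, Walk.edges_cons, Walk.edges_nil, List.nodup_cons, List.mem_cons,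
        List.not_mem_nil, or_false, List.nodup_nil, and_true]
      refine ⟨?_, ?_, not_false⟩
      · rintro (h | h) <;> (rw [Sym2.eq_iff] at h; tauto)
      · intro h; rw [Sym2.eq_iff] at h; tauto
    · simp only [hw, Walk.support_cons, Walk.support_nil, List.tail_cons, List.nodup_cons,
        List.mem_cons, List.not_mem_nil, or_false, List.nodup_nil, and_true,
        List.mem_singleton, List.not_mem_nil]
      tauto
  have := SimpleGraph.le_egirth.mp (le_refl G.egirth) x w hcyc
  have h4 : (4 : ℕ∞) ≤ (w.length : ℕ∞) := le_trans hg this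
  have : w.length = 3 := by simp [hw]
  rw [this] at h4
  norm_num at h4

lemma induce_conn_of_all_reach {G' : SimpleGraph V} {S : Set V} {v : V} (hv : v ∈ S)
    (h : ∀ u (hu : u ∈ S), (G'.induce S).Reachable ⟨u, hu⟩ ⟨v, hv⟩) :
    (G'.induce S).Connected := by
  rw [connected_iff]
  exact ⟨fun ⟨a, ha⟩ ⟨b, hb⟩ => (h a ha).trans (h b hb).symm, ⟨⟨v, hv⟩⟩⟩

lemma pair_induce_connected {G' : SimpleGraph V} {x y : V} (h : G'.Adj x y) :
    (G'.induce {x, y}).Connected := by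
  have hx : x ∈ ({x, y} : Set V) := by simp
  refine induce_conn_of_all_reach hx (fun u hu => ?_)
  rcases Set.mem_insert_iff.mp hu with h1 | h1
  · rw [show (⟨u, hu⟩ : {a // a ∈ ({x, y} : Set V)}) = ⟨x, hx⟩ from Subtype.ext h1]
  · have : (G'.induce {x, y}).Adj ⟨u, hu⟩ ⟨x, hx⟩ := by
      rw [comap_adj]
      simp only [Function.Embedding.coe_subtype]
      rw [Set.mem_singleton_iff.mp h1]
      exact h.symm
    exact this.reachable

lemma triple_induce_connected {G' : SimpleGraph V} {x y z : V} (hxy : G'.Adj x y)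
    (hyz : G'.Adj y z) : (G'.induce {x, y, z}).Connected := by
  have hy : y ∈ ({x, y, z} : Set V) := by simp
  refine induce_conn_of_all_reach hy (fun u hu => ?_)
  rcases Set.mem_insert_iff.mp hu with h1 | h1
  · have : (G'.induce {x, y, z}).Adj ⟨u, hu⟩ ⟨y, hy⟩ := by
      rw [comap_adj]; simp only [Function.Embedding.coe_subtype]; rw [h1]; exact hxy
    exact this.reachable
  rcases Set.mem_insert_iff.mp h1 with h2 | h2
  · rw [show (⟨u, hu⟩ : {a // a ∈ ({x, y, z} : Set V)}) = ⟨y, hy⟩ from Subtype.ext h2]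
  · have : (G'.induce {x, y, z}).Adj ⟨u, hu⟩ ⟨y, hy⟩ := by
      rw [comap_adj]; simp only [Function.Embedding.coe_subtype]
      rw [Set.mem_singleton_iff.mp h2]; exact hyz.symm
    exact this.reachable

lemma adj_of_pair_connected {G' : SimpleGraph V} {x y : V} (hne : x ≠ y)
    (h : (G'.induce {x, y}).Connected) : G'.Adj x y := by
  have hx : x ∈ ({x, y} : Set V) := by simp
  have hy : y ∈ ({x, y} : Set V) := by simp
  obtain ⟨p⟩ := h.preconnected ⟨x, hx⟩ ⟨y, hy⟩
  cases p with
  | nil => exact absurd rfl hne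
  | cons hadj p =>
    rename_i w
    have hGadj : G'.Adj x ↑w := comap_adj.mp hadj
    rcases Set.mem_insert_iff.mp w.2 with h1 | h1
    · exact absurd (h1 ▸ hGadj) (G'.irrefl)
    · exact (Set.mem_singleton_iff.mp h1) ▸ hGadj

lemma exists_nbr_in_of_connected {G' : SimpleGraph V} {S : Set V}
    (h : (G'.induce S).Connected) {u w : V} (hu : u ∈ S) (hw : w ∈ S) (hne : u ≠ w) :
    ∃ v ∈ S, G'.Adj u v := by
  obtain ⟨p⟩ := h.preconnected ⟨u, hu⟩ ⟨w, hw⟩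
  cases p with
  | nil => exact absurd rfl hne
  | cons hadj p =>
    rename_i v
    exact ⟨↑v, v.2, comap_adj.mp hadj⟩

end Aux5
section Aux6
variable {V : Type*}

/-- In a triangle-free graph, a connected induced 3-set is a path. -/
lemma path_of_triple_connected {G : SimpleGraph V}
    (htf : ∀ ⦃a b c : V⦄, G.Adj a b → G.Adj b c → a ≠ c → ¬ G.Adj a c)
    {x y z : V} (hxy : x ≠ y) (hyz : y ≠ z) (hxz : x ≠ z)
    (h : (G.induce {x, y, z}).Connected) :
    ∃ a b c : V, ({x, y, z} : Set V) = {a, b, c} ∧ a ≠ c ∧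
      G.Adj a b ∧ G.Adj b c ∧ ¬ G.Adj a c := by
  have hxm : x ∈ ({x, y, z} : Set V) := by simp
  have hym : y ∈ ({x, y, z} : Set V) := by simp
  have hzm : z ∈ ({x, y, z} : Set V) := by simp
  obtain ⟨v, hv, hzv⟩ := exists_nbr_in_of_connected h hzm hxm (Ne.symm hxz)
  have hcase1 : G.Adj z x ∨ G.Adj z y := by
    rcases hv with rfl | rfl | rfl
    · exact Or.inl hzv
    · exact Or.inr hzv
    · exact absurd hzv G.irrefl
  rcases hcase1 with hzx | hzy
  · obtain ⟨w, hw, hyw⟩ := exists_nbr_in_of_connected h hym hxm (Ne.symm hxy)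
    have hcase2 : G.Adj y x ∨ G.Adj y z := by
      rcases hw with rfl | rfl | rfl
      · exact Or.inl hyw
      · exact absurd hyw G.irrefl
      · exact Or.inr hyw
    rcases hcase2 with hyx | hyz2
    · refine ⟨y, x, z, by ext; simp; tauto, hyz, hyx, hzx.symm, htf hyx hzx.symm hyz⟩
    · refine ⟨x, z, y, by ext; simp; tauto, hxy, hzx.symm, hyz2.symm, htf hzx.symm hyz2.symm hxy⟩
  · obtain ⟨w, hw, hxw⟩ := exists_nbr_in_of_connected h hxm hym hxy
    have hcase2 : G.Adj x y ∨ G.Adj x z := by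
      rcases hw with rfl | rfl | rfl
      · exact absurd hxw G.irrefl
      · exact Or.inl hxw
      · exact Or.inr hxw
    rcases hcase2 with hxy2 | hxz2
    · exact ⟨x, y, z, rfl, hxz, hxy2, hzy.symm, htf hxy2 hzy.symm hxz⟩
    · refine ⟨x, z, y, by ext; simp; tauto, hxy, hxz2, hzy, htf hxz2 hzy hxy⟩

end Aux6
section Aux7
variable {V : Type*}

lemma bdry_subset_cut {G' : SimpleGraph V} {F' : Set (Sym2 V)}
    (c : (G'.deleteEdges F').ConnectedComponent) :
    bdry G' c.supp ⊆ F' := by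
  intro e he
  induction e with
  | _ a b =>
    obtain ⟨hadj, hor⟩ := mem_bdry.mp he
    by_contra hne
    rcases hor with ⟨ha, hb⟩ | ⟨hb, ha⟩
    · exact hb (supp_closed c ha (SimpleGraph.deleteEdges_adj.mpr ⟨hadj, hne⟩))
    · refine ha (supp_closed c hb (SimpleGraph.deleteEdges_adj.mpr ⟨hadj.symm, ?_⟩))
      rwa [Sym2.eq_swap]

lemma not_mem_bdry_of_both {G' : SimpleGraph V} {X : Set V} {a b : V}
    (ha : a ∈ X) (hb : b ∈ X) : s(a, b) ∉ bdry G' X := by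
  intro h
  rcases (mem_bdry.mp h).2 with ⟨_, h2⟩ | ⟨_, h2⟩
  exacts [h2 hb, h2 ha]

lemma comp_supp_of_bdry {G' : SimpleGraph V} {X : Set V} {v : V} (hv : v ∈ X)
    (hconn : ∀ w ∈ X, (G'.deleteEdges (bdry G' X)).Reachable v w) :
    ((G'.deleteEdges (bdry G' X)).connectedComponentMk v).supp = X := by
  refine supp_eq_of hv ?_ hconn
  intro a b hab ha
  rw [SimpleGraph.deleteEdges_adj] at hab
  by_contra hb
  exact hab.2 (mem_bdry.mpr ⟨hab.1, Or.inl ⟨ha, hb⟩⟩)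

lemma disjoint_of_subset_H {G : SimpleGraph V} {F F' : Set (Sym2 V)}
    (hF' : F' ⊆ (G.deleteEdges F).edgeSet) : Disjoint F F' := by
  rw [Set.disjoint_right]
  intro e he
  rw [SimpleGraph.edgeSet_deleteEdges] at hF'
  exact (hF' he).2

lemma reach_in_induce {G G' : SimpleGraph V} (hle : G' ≤ G) (c : G'.ConnectedComponent) :
    ∀ {u w : V} (_ : G'.Walk u w) (hu : u ∈ c.supp) (hw : w ∈ c.supp),
      (G.induce c.supp).Reachable ⟨u, hu⟩ ⟨w, hw⟩ := by
  intro u w p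
  induction p with
  | nil => intro hu hw; exact Reachable.refl _
  | @cons a b w hadj p ih =>
    intro hu hw
    have hb : b ∈ c.supp := supp_closed c hu hadj
    exact (Adj.reachable (show (G.induce c.supp).Adj ⟨a, hu⟩ ⟨b, hb⟩ by
      rw [comap_adj]; exact hle hadj)).trans (ih hb hw)

/-- A component of a subgraph-by-edge-deletion induces a connected subgraph of the
ambient graph. -/
lemma supp_induce_connected {G G' : SimpleGraph V} (hle : G' ≤ G)
    (c : G'.ConnectedComponent) : (G.induce c.supp).Connected := by
  obtain ⟨v, hv⟩ : ∃ v, v ∈ c.supp := by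
    obtain ⟨v, rfl⟩ := c.exists_rep
    exact ⟨v, supp_mem_self v⟩
  refine induce_conn_of_all_reach hv (fun u hu => ?_)
  obtain ⟨p⟩ := supp_reach c hu hv
  exact reach_in_induce hle c p hu hv

end Aux7
section Aux8
variable {V : Type*}

lemma sym2_eq_of_mems {e : Sym2 V} {u y : V} (hu : u ∈ e) (hy : y ∈ e) (hne : u ≠ y) :
    e = s(u, y) := by
  induction e with
  | _ a b =>
    rcases Sym2.mem_iff.mp hu with rfl | rfl <;> rcases Sym2.mem_iff.mp hy with h | h
    · exact absurd h.symm hne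
    · rw [h]
    · rw [h, Sym2.eq_swap]
    · exact absurd h.symm hne

lemma edge_repr {G : SimpleGraph V} {e : Sym2 V} (he : e ∈ G.edgeSet) :
    ∃ a b, e = s(a, b) ∧ G.Adj a b := by
  induction e with
  | _ a b => exact ⟨a, b, rfl, G.mem_edgeSet.mp he⟩

lemma inj_nbr (G' : SimpleGraph V) (v : V) :
    Set.InjOn (fun w => s(v, w)) (G'.neighborSet v) := by
  intro w hw w' _ hww'
  rcases Sym2.eq_iff.mp hww' with ⟨_, h⟩ | ⟨h1, h2⟩
  · exact h
  · exact absurd h2 (G'.ne_of_adj hw).symm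

end Aux8

section Aux9
variable {V : Type*} [Fintype V]

lemma bdry_card_ge_in {G : SimpleGraph V} {S : Set V} {v : V} (hv : v ∈ S) :
    (G.neighborSet v \ S).ncard ≤ (bdry G S).ncard := by
  have himg : (fun w => s(v, w)) '' (G.neighborSet v \ S) ⊆ bdry G S := by
    rintro e ⟨w, ⟨hw1, hw2⟩, rfl⟩
    exact mem_bdry.mpr ⟨hw1, Or.inl ⟨hv, hw2⟩⟩
  calc (G.neighborSet v \ S).ncard
      = ((fun w => s(v, w)) '' (G.neighborSet v \ S)).ncard :=
        (Set.ncard_image_of_injOn ((inj_nbr G v).mono Set.diff_subset)).symm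
    _ ≤ (bdry G S).ncard := Set.ncard_le_ncard himg (Set.toFinite _)

lemma bdry_card_ge_out {G : SimpleGraph V} {S : Set V} {v : V} (hv : v ∉ S) :
    (G.neighborSet v ∩ S).ncard ≤ (bdry G S).ncard := by
  have himg : (fun w => s(v, w)) '' (G.neighborSet v ∩ S) ⊆ bdry G S := by
    rintro e ⟨w, ⟨hw1, hw2⟩, rfl⟩
    exact mem_bdry.mpr ⟨hw1, Or.inr ⟨hw2, hv⟩⟩
  calc (G.neighborSet v ∩ S).ncard
      = ((fun w => s(v, w)) '' (G.neighborSet v ∩ S)).ncard :=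
        (Set.ncard_image_of_injOn ((inj_nbr G v).mono Set.inter_subset_left)).symm
    _ ≤ (bdry G S).ncard := Set.ncard_le_ncard himg (Set.toFinite _)

lemma card_univ_ge {G : SimpleGraph V} {k : ℕ} (hreg : ∀ v, degN G v = k) (v : V) :
    k + 1 ≤ (Set.univ : Set V).ncard := by
  have hvn : v ∉ G.neighborSet v := fun h => G.irrefl h
  have h1 : (insert v (G.neighborSet v)).ncard = (G.neighborSet v).ncard + 1 :=
    Set.ncard_insert_of_notMem hvn (Set.toFinite _)
  have h2 := hreg v
  unfold degN at h2
  have h3 : (insert v (G.neighborSet v)).ncard ≤ (Set.univ : Set V).ncard :=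
    Set.ncard_le_ncard (Set.subset_univ _) (Set.toFinite _)
  omega

lemma exists_not_mem_pair {x y : V} (h : 2 < (Set.univ : Set V).ncard) :
    ∃ u, u ∉ ({x, y} : Set V) := by
  by_contra hc
  push_neg at hc
  have : (Set.univ : Set V) ⊆ {x, y} := fun u _ => hc u
  have := Set.ncard_le_ncard this (Set.toFinite _)
  have h2 : ({x, y} : Set V).ncard ≤ 2 := le_trans (Set.ncard_insert_le _ _) (by simp)
  omega

lemma f_sum_three {F : Set (Sym2 V)} {G : SimpleGraph V} {a b c : V}
    (hab : a ≠ b) (hbc : b ≠ c) (hac : a ≠ c)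
    (hsub : F ⊆ bdry G {a, b, c}) :
    {e ∈ F | a ∈ e}.ncard + {e ∈ F | b ∈ e}.ncard + {e ∈ F | c ∈ e}.ncard = F.ncard := by
  have hmem : ∀ e ∈ F, ∀ u v : V, u ∈ ({a,b,c} : Set V) → v ∈ ({a,b,c} : Set V) →
      u ≠ v → ¬(u ∈ e ∧ v ∈ e) := by
    rintro e he u v hu hv huv ⟨h1, h2⟩
    have : e = s(u, v) := sym2_eq_of_mems h1 h2 huv
    exact not_mem_bdry_of_both hu hv (this ▸ hsub he)
  have hcover : ∀ e ∈ F, a ∈ e ∨ b ∈ e ∨ c ∈ e := by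
    intro e he
    obtain ⟨hE, x, hx, y, hy, rfl⟩ := hsub he
    rcases hx with rfl | rfl | rfl
    · exact Or.inl (Sym2.mem_mk_left _ _)
    · exact Or.inr (Or.inl (Sym2.mem_mk_left _ _))
    · exact Or.inr (Or.inr (Sym2.mem_mk_left _ _))
  have hd1 : Disjoint {e ∈ F | a ∈ e} ({e ∈ F | b ∈ e} ∪ {e ∈ F | c ∈ e}) := by
    rw [Set.disjoint_left]
    rintro e ⟨he, ha⟩ (⟨_, hb⟩ | ⟨_, hc⟩)
    · exact hmem e he a b (by simp) (by simp) hab ⟨ha, hb⟩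
    · exact hmem e he a c (by simp) (by simp) hac ⟨ha, hc⟩
  have hd2 : Disjoint {e ∈ F | b ∈ e} {e ∈ F | c ∈ e} := by
    rw [Set.disjoint_left]
    rintro e ⟨he, hb⟩ ⟨_, hc⟩
    exact hmem e he b c (by simp) (by simp) hbc ⟨hb, hc⟩
  have hunion : {e ∈ F | a ∈ e} ∪ ({e ∈ F | b ∈ e} ∪ {e ∈ F | c ∈ e}) = F := by
    ext e
    constructor
    · rintro (⟨he, _⟩ | ⟨he, _⟩ | ⟨he, _⟩) <;> exact he
    · intro he
      rcases hcover e he with h | h | h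
      · exact Or.inl ⟨he, h⟩
      · exact Or.inr (Or.inl ⟨he, h⟩)
      · exact Or.inr (Or.inr ⟨he, h⟩)
  calc {e ∈ F | a ∈ e}.ncard + {e ∈ F | b ∈ e}.ncard + {e ∈ F | c ∈ e}.ncard
      = {e ∈ F | a ∈ e}.ncard + ({e ∈ F | b ∈ e} ∪ {e ∈ F | c ∈ e}).ncard := by
        rw [Set.ncard_union_eq hd2 (Set.toFinite _) (Set.toFinite _)]; ring
    _ = ({e ∈ F | a ∈ e} ∪ ({e ∈ F | b ∈ e} ∪ {e ∈ F | c ∈ e})).ncard :=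
        (Set.ncard_union_eq hd1 (Set.toFinite _) (Set.toFinite _)).symm
    _ = F.ncard := by rw [hunion]

end Aux9
section Aux10
variable {V : Type*} [Fintype V]

lemma lambdaH_le {G' : SimpleGraph V} {h : ℕ} {F0 : Set (Sym2 V)}
    (hcut : IsExtraEdgeCut G' h F0) : lambdaH G' h ≤ F0.ncard :=
  Nat.sInf_le ⟨F0, hcut, rfl⟩

lemma xiH_le {G' : SimpleGraph V} {h : ℕ} {X : Set V} (hX : X.ncard = h + 1)
    (hc : (G'.induce X).Connected) : xiH G' h ≤ dOut G' X :=
  Nat.sInf_le ⟨X, hX, hc, rfl⟩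

lemma xi1_le_pair {G' : SimpleGraph V} {a b : V} (hadj : G'.Adj a b) :
    xiH G' 1 ≤ dOut G' {a, b} :=
  xiH_le (Set.ncard_pair (G'.ne_of_adj hadj)) (pair_induce_connected hadj)

/-- Case analysis for a 1-extra edge-cut. -/
lemma cut_cases {H : SimpleGraph V} {F' : Set (Sym2 V)} (hcut : IsExtraEdgeCut H 1 F') :
    (∃ x y, H.Adj x y ∧ bdry H {x, y} ⊆ F' ∧
       ∃ c : (H.deleteEdges F').ConnectedComponent, c.supp = {x, y}) ∨
    (∀ c : (H.deleteEdges F').ConnectedComponent, 2 < c.supp.ncard) := by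
  by_cases hex : ∃ c : (H.deleteEdges F').ConnectedComponent, c.supp.ncard = 2
  · obtain ⟨c, hc⟩ := hex
    obtain ⟨x, y, hxy, hsupp⟩ := Set.ncard_eq_two.mp hc
    left
    have hx : x ∈ c.supp := by rw [hsupp]; simp
    have hy : y ∈ c.supp := by rw [hsupp]; simp
    obtain ⟨p⟩ := supp_reach c hx hy
    have hadj : (H.deleteEdges F').Adj x y := by
      cases p with
      | nil => exact absurd rfl hxy
      | cons h p =>
        rename_i w
        have hw : w ∈ c.supp := supp_closed c hx h
        rw [hsupp] at hw
        rcases hw with rfl | rfl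
        · exact absurd h (H.deleteEdges F').irrefl
        · exact h
    refine ⟨x, y, (SimpleGraph.deleteEdges_adj.mp hadj).1, ?_, c, hsupp⟩
    rw [← hsupp]
    exact bdry_subset_cut c
  · right
    intro c
    have h1 := hcut.2.2 c
    have h2 : c.supp.ncard ≠ 2 := fun h => hex ⟨c, h⟩
    omega

lemma lift_cut {G : SimpleGraph V} {F F' : Set (Sym2 V)} (hF : F ⊆ G.edgeSet)
    (h1 : IsExtraEdgeCut (G.deleteEdges F) 1 F')
    (h2 : ∀ c : ((G.deleteEdges F).deleteEdges F').ConnectedComponent, 2 < c.supp.ncard) :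
    IsExtraEdgeCut G 2 (F ∪ F') := by
  have heq : G.deleteEdges (F ∪ F') = (G.deleteEdges F).deleteEdges F' :=
    (SimpleGraph.deleteEdges_deleteEdges F F').symm
  refine ⟨?_, ?_, ?_⟩
  · intro e he
    rcases he with he | he
    · exact hF he
    · have := h1.1 he
      rw [SimpleGraph.edgeSet_deleteEdges] at this
      exact this.1
  · rw [heq]; exact h1.2.1
  · rw [heq]; exact h2

/-- The boundary of an adjacent pair is a 1-extra edge-cut, provided every outside vertex
has an outside neighbor and there is an outside vertex. -/
lemma pair_cut {H : SimpleGraph V} {x y : V} (hxy : H.Adj x y)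
    (hout : ∀ u, u ∉ ({x, y} : Set V) → ∃ w, w ∉ ({x, y} : Set V) ∧ H.Adj u w)
    (hnotall : ∃ u, u ∉ ({x, y} : Set V)) :
    IsExtraEdgeCut H 1 (bdry H {x, y}) := by
  set X : Set V := {x, y} with hX
  set D := H.deleteEdges (bdry H X) with hD
  have hxX : x ∈ X := by simp [hX]
  have hyX : y ∈ X := by simp [hX]
  have hadjD : D.Adj x y :=
    SimpleGraph.deleteEdges_adj.mpr ⟨hxy, not_mem_bdry_of_both hxX hyX⟩
  have hsupp : (D.connectedComponentMk x).supp = X := by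
    refine comp_supp_of_bdry hxX ?_
    intro w hw
    rcases hw with rfl | rfl
    · exact Reachable.refl _
    · exact hadjD.reachable
  obtain ⟨u0, hu0⟩ := hnotall
  refine ⟨bdry_subset_edgeSet, ?_, ?_⟩
  · refine not_connected_of (v := x) (u := u0) ?_
    rw [hsupp]
    exact hu0
  · intro c
    obtain ⟨v, rfl⟩ := c.exists_rep
    show 1 < (D.connectedComponentMk v).supp.ncard
    by_cases hv : v ∈ X
    · have : D.connectedComponentMk v = D.connectedComponentMk x := by
        rcases hv with rfl | rfl
        · rfl
        · exact ConnectedComponent.connectedComponentMk_eq_of_adj hadjD.symm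
      rw [this, hsupp, hX]
      rw [Set.ncard_pair (H.ne_of_adj hxy)]
      omega
    · obtain ⟨w, hwX, hadj⟩ := hout v hv
      have hDadj : D.Adj v w := by
        refine SimpleGraph.deleteEdges_adj.mpr ⟨hadj, ?_⟩
        intro hmem
        rcases (mem_bdry.mp hmem).2 with ⟨h1, _⟩ | ⟨h1, _⟩
        exacts [hv h1, hwX h1]
      have hw : w ∈ (D.connectedComponentMk v).supp :=
        supp_closed _ (supp_mem_self v) hDadj
      rw [Set.one_lt_ncard (Set.toFinite _)]
      exact ⟨v, supp_mem_self v, w, hw, H.ne_of_adj hadj⟩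

end Aux10
section Aux11
variable {V : Type*} [Fintype V]

lemma ncard_triple {a b c : V} (hab : a ≠ b) (hbc : b ≠ c) (hac : a ≠ c) :
    ({a, b, c} : Set V).ncard = 3 :=
  Set.ncard_eq_three.mpr ⟨a, b, c, hab, hac, hbc, rfl⟩

lemma xi2_mem {G : SimpleGraph V} {k : ℕ} (hk : 2 ≤ k) (hreg : ∀ v, degN G v = k)
    (htf : ∀ ⦃a b c : V⦄, G.Adj a b → G.Adj b c → a ≠ c → ¬ G.Adj a c) (v : V) :
    (3 * k - 4) ∈ {m | ∃ X : Set V, X.ncard = 2 + 1 ∧ (G.induce X).Connected ∧ dOut G X = m} := by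
  have hdeg := hreg v
  unfold degN at hdeg
  have h2 : 1 < (G.neighborSet v).ncard := by omega
  obtain ⟨x, hx, z, hz, hxz⟩ := (Set.one_lt_ncard (Set.toFinite _)).mp h2
  rw [SimpleGraph.mem_neighborSet] at hx hz
  have hnadj : ¬ G.Adj x z := htf hx.symm hz hxz
  have hd := dOut_triple hx.symm hz hnadj hxz
  rw [hreg, hreg, hreg] at hd
  refine ⟨{x, v, z}, ncard_triple (G.ne_of_adj hx.symm) (G.ne_of_adj hz) hxz,
    triple_induce_connected hx.symm hz, by omega⟩

lemma xi2_all {G : SimpleGraph V} {k : ℕ} (hreg : ∀ v, degN G v = k)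
    (htf : ∀ ⦃a b c : V⦄, G.Adj a b → G.Adj b c → a ≠ c → ¬ G.Adj a c) {m : ℕ}
    (hm : m ∈ {m | ∃ X : Set V, X.ncard = 2 + 1 ∧ (G.induce X).Connected ∧ dOut G X = m}) :
    m = 3 * k - 4 := by
  obtain ⟨X, hX3, hXc, hXd⟩ := hm
  obtain ⟨x, y, z, hxy, hxz, hyz, rfl⟩ := Set.ncard_eq_three.mp hX3
  obtain ⟨a, b, c, heq, hac, hab, hbc, hnac⟩ := path_of_triple_connected htf hxy hyz hxz hXc
  rw [heq] at hXd
  have hd := dOut_triple hab hbc hnac hac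
  rw [hreg, hreg, hreg] at hd
  omega

lemma xi2_eq {G : SimpleGraph V} {k : ℕ} (hk : 2 ≤ k) (hreg : ∀ v, degN G v = k)
    (htf : ∀ ⦃a b c : V⦄, G.Adj a b → G.Adj b c → a ≠ c → ¬ G.Adj a c) (v : V) :
    xiH G 2 = 3 * k - 4 := by
  have hmem := xi2_mem hk hreg htf v
  refine le_antisymm (Nat.sInf_le hmem) (le_csInf ⟨_, hmem⟩ (fun b hb => ?_))
  rw [xi2_all hreg htf hb]

end Aux11
section Aux12
variable {V : Type*} [Fintype V]

lemma not_mem_bdry_of_neither {G' : SimpleGraph V} {X : Set V} {a b : V}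
    (ha : a ∉ X) (hb : b ∉ X) : s(a, b) ∉ bdry G' X := by
  intro h
  rcases (mem_bdry.mp h).2 with ⟨h1, _⟩ | ⟨h1, _⟩
  exacts [ha h1, hb h1]

/-- Every 1-extra edge-cut of `G` has at least `2k - 2` edges. -/
lemma cut1_lower {G : SimpleGraph V} {k : ℕ} (hk : 4 ≤ k) (hreg : ∀ v, degN G v = k)
    (hl2 : ∀ F0 : Set (Sym2 V), IsExtraEdgeCut G 2 F0 → 3 * k - 4 ≤ F0.ncard)
    {F0 : Set (Sym2 V)} (hcut : IsExtraEdgeCut G 1 F0) : 2 * k - 2 ≤ F0.ncard := by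
  rcases cut_cases hcut with ⟨x, y, hadj, hbd, -⟩ | hall
  · have hd := dOut_pair hadj
    rw [hreg, hreg] at hd
    have := Set.ncard_le_ncard hbd (Set.toFinite _)
    rw [dOut_def'] at hd
    omega
  · have := hl2 F0 ⟨hcut.1, hcut.2.1, hall⟩
    omega

/-- Removing at most `k - 1` edges from `G` keeps it connected. -/
lemma H_connected {G : SimpleGraph V} {k : ℕ} (hk : 4 ≤ k) (hreg : ∀ v, degN G v = k)
    (hGconn : G.Connected)
    (hl2 : ∀ F0 : Set (Sym2 V), IsExtraEdgeCut G 2 F0 → 3 * k - 4 ≤ F0.ncard)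
    {F : Set (Sym2 V)} (hF : F ⊆ G.edgeSet) (ht : F.ncard ≤ k - 1) :
    (G.deleteEdges F).Connected := by
  set H := G.deleteEdges F with hH
  by_contra hnc
  rw [SimpleGraph.connected_iff] at hnc
  push_neg at hnc
  have hne : Nonempty V := hGconn.nonempty
  obtain ⟨u, w, hreach⟩ : ∃ u w, ¬ H.Reachable u w := by
    by_contra hc
    push_neg at hc
    exact (hnc (fun a b => hc a b)).false hne.some
  set S := (H.connectedComponentMk u).supp with hS
  have huS : u ∈ S := supp_mem_self u
  have hwS : w ∉ S := fun hw => hreach (supp_reach _ huS hw)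
  have hbd : bdry G S ⊆ F := by
    intro e he
    induction e with
    | _ a b =>
      obtain ⟨hE, hor⟩ := mem_bdry.mp he
      by_contra hcon
      rcases hor with ⟨ha, hb⟩ | ⟨hb, ha⟩
      · exact hb (supp_closed _ ha (SimpleGraph.deleteEdges_adj.mpr ⟨hE, hcon⟩))
      · refine ha (supp_closed _ hb (SimpleGraph.deleteEdges_adj.mpr ⟨hE.symm, ?_⟩))
        rwa [Sym2.eq_swap]
  have hbdc : (bdry G S).ncard ≤ k - 1 :=
    le_trans (Set.ncard_le_ncard hbd (Set.toFinite _)) ht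
  set D := G.deleteEdges (bdry G S) with hD
  have hle : H ≤ D := by
    intro a b hab
    rw [hH, SimpleGraph.deleteEdges_adj] at hab
    rw [hD, SimpleGraph.deleteEdges_adj]
    exact ⟨hab.1, fun hmem => hab.2 (hbd hmem)⟩
  have hclos : ∀ a b, D.Adj a b → a ∈ S → b ∈ S := by
    intro a b hab ha
    by_contra hb
    exact (SimpleGraph.deleteEdges_adj.mp hab).2
      (mem_bdry.mpr ⟨(SimpleGraph.deleteEdges_adj.mp hab).1, Or.inl ⟨ha, hb⟩⟩)
  have hsuppD : (D.connectedComponentMk u).supp = S := by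
    refine supp_eq_of huS hclos ?_
    intro w' hw'
    exact (supp_reach _ huS hw').mono hle
  have hnbr : ∀ v : V, ∃ w', D.Adj v w' := by
    intro v
    have hdeg := hreg v
    unfold degN at hdeg
    by_cases hv : v ∈ S
    · by_contra hc
      push_neg at hc
      have hdiff : G.neighborSet v \ S = G.neighborSet v := by
        refine subset_antisymm Set.diff_subset (fun w' hw' => ⟨hw', fun hw2 => ?_⟩)
        exact hc w' (SimpleGraph.deleteEdges_adj.mpr ⟨hw', not_mem_bdry_of_both hv hw2⟩)
      have hge := bdry_card_ge_in (G := G) hv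
      rw [hdiff, hdeg] at hge
      omega
    · by_contra hc
      push_neg at hc
      have hinter : G.neighborSet v ∩ S = G.neighborSet v := by
        rw [Set.inter_eq_self_of_subset_left]
        intro w' hw'
        by_contra hw2
        exact hc w' (SimpleGraph.deleteEdges_adj.mpr ⟨hw', not_mem_bdry_of_neither hv hw2⟩)
      have hge := bdry_card_ge_out (G := G) hv
      rw [hinter, hdeg] at hge
      omega
  have hcut : IsExtraEdgeCut G 1 (bdry G S) := by
    refine ⟨bdry_subset_edgeSet, ?_, ?_⟩
    · refine not_connected_of (v := u) (u := w) ?_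
      rw [hsuppD]
      exact hwS
    · intro c
      obtain ⟨v, rfl⟩ := c.exists_rep
      show 1 < (D.connectedComponentMk v).supp.ncard
      obtain ⟨w', hw'⟩ := hnbr v
      rw [Set.one_lt_ncard (Set.toFinite _)]
      exact ⟨v, supp_mem_self v, w', supp_closed _ (supp_mem_self v) hw', D.ne_of_adj hw'⟩
  have := cut1_lower hk hreg hl2 hcut
  omega

end Aux12
section Key
variable {V : Type*} [Fintype V]

lemma key {G : SimpleGraph V} {k : ℕ} (hk : 4 ≤ k)
    (hreg : ∀ v, degN G v = k) (hs : SuperLambda G 2)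
    (htf : ∀ ⦃a b c : V⦄, G.Adj a b → G.Adj b c → a ≠ c → ¬ G.Adj a c)
    {F : Set (Sym2 V)} (hF : F ⊆ G.edgeSet) (ht : F.ncard ≤ k - 1) :
    SuperLambda (G.deleteEdges F) 1 := by
  classical
  obtain ⟨hGconn, hLC2, hopt2, hsuper2⟩ := hs
  have hne : Nonempty V := hGconn.nonempty
  obtain ⟨v0⟩ := hne
  have hxi2 : xiH G 2 = 3 * k - 4 := xi2_eq (by omega) hreg htf v0
  have hl2 : ∀ F0 : Set (Sym2 V), IsExtraEdgeCut G 2 F0 → 3 * k - 4 ≤ F0.ncard := by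
    intro F0 h0
    have h1 := lambdaH_le h0
    rw [hopt2, hxi2] at h1
    exact h1
  set H := G.deleteEdges F with hHdef
  set t := F.ncard with htdef
  have hHconn : H.Connected := H_connected hk hreg hGconn hl2 hF ht
  have hHle : H ≤ G := SimpleGraph.deleteEdges_le F
  have hdegH_le : ∀ v, degN H v ≤ k := fun v => (hreg v) ▸ degN_mono hHle v
  have hfv : ∀ v, degN H v + {e ∈ F | v ∈ e}.ncard = k := fun v =>
    (hreg v) ▸ degN_deleteEdges hF v
  have hfv_le : ∀ v, {e ∈ F | v ∈ e}.ncard ≤ t := fun v =>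
    Set.ncard_le_ncard (Set.sep_subset _ _) (Set.toFinite _)
  have hdegH_ge : ∀ v, k - t ≤ degN H v := by
    intro v; have h1 := hfv v; have h2 := hfv_le v; omega
  have hdegH_pos : ∀ v, 1 ≤ degN H v := by
    intro v; have := hdegH_ge v; omega
  have hnb : ∀ vv : V, ∃ w, H.Adj vv w := by
    intro vv
    have h1 := hdegH_pos vv
    obtain ⟨w, hw⟩ := (Set.ncard_pos (Set.toFinite _)).mp (by
      show 0 < (H.neighborSet vv).ncard
      have : degN H vv = (H.neighborSet vv).ncard := rfl
      omega)
    exact ⟨w, hw⟩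
  have hcard : k + 1 ≤ (Set.univ : Set V).ncard := card_univ_ge hreg v0
  -- an H-edge
  obtain ⟨a0, -, b0, -, hab0⟩ := (Set.one_lt_ncard (Set.toFinite _)).mp
    (show 1 < (Set.univ : Set V).ncard by omega)
  obtain ⟨c0, hc0⟩ := adj_of_conn_ne hHconn hab0
  have hxiH_le2 : xiH H 1 ≤ 2 * k - 2 := by
    have h1 := xi1_le_pair hc0
    have hd := dOut_pair hc0
    have h2 := hdegH_le a0; have h3 := hdegH_le c0
    omega
  have hxiH_le3 : 1 ≤ t → xiH H 1 ≤ 2 * k - 3 := by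
    intro ht1
    obtain ⟨e, he⟩ := Set.nonempty_of_ncard_ne_zero (s := F) (by omega)
    obtain ⟨a, b, rfl, hGab⟩ := edge_repr (hF he)
    have hfa : 1 ≤ {e ∈ F | a ∈ e}.ncard := by
      rw [Nat.one_le_iff_ne_zero]
      intro hzero
      rw [Set.ncard_eq_zero (Set.toFinite _)] at hzero
      have hmm : s(a, b) ∈ {e ∈ F | a ∈ e} := ⟨he, Sym2.mem_mk_left a b⟩
      rw [hzero] at hmm
      exact hmm
    obtain ⟨c, hc⟩ := hnb a
    have h1 := xi1_le_pair hc
    have hd := dOut_pair hc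
    have h2 := hfv a; have h3 := hdegH_le c
    omega
  -- the ξ-attaining pair
  have hxiSet : xiH H 1 = sInf {m | ∃ X : Set V, X.ncard = 1 + 1 ∧
      (H.induce X).Connected ∧ dOut H X = m} := rfl
  have hxine : {m | ∃ X : Set V, X.ncard = 1 + 1 ∧
      (H.induce X).Connected ∧ dOut H X = m}.Nonempty :=
    ⟨dOut H {a0, c0}, {a0, c0}, Set.ncard_pair (H.ne_of_adj hc0),
      pair_induce_connected hc0, rfl⟩
  have hximem := Nat.sInf_mem hxine
  rw [← hxiSet] at hximem
  obtain ⟨X0, hX0c2, hX0conn, hX0d⟩ := hximem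
  obtain ⟨x, y, hxyne, rfl⟩ := Set.ncard_eq_two.mp (show X0.ncard = 2 by omega)
  have hxy : H.Adj x y := adj_of_pair_connected hxyne hX0conn
  -- minimality: every outside vertex has an outside neighbor
  have hout : ∀ u, u ∉ ({x, y} : Set V) → ∃ w, w ∉ ({x, y} : Set V) ∧ H.Adj u w := by
    intro u hu
    by_contra hcon
    push_neg at hcon
    have hNsub : H.neighborSet u ⊆ {x, y} := by
      intro w hw
      by_contra hwX
      exact hcon w hwX hw
    have hnotboth : ¬ (H.Adj u x ∧ H.Adj u y) := by
      rintro ⟨h1, h2⟩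
      have hune : u ≠ y := fun h => hu (by rw [h]; simp)
      exact htf (hHle h1).symm.symm (hHle hxy) hune (hHle h2)
    have hdegu : degN H u = 1 := by
      have hle1 : degN H u ≤ 1 := by
        by_cases hx : H.Adj u x
        · have hsub : H.neighborSet u ⊆ {x} := by
            intro w hw
            rcases hNsub hw with h | h
            · exact h
            · exact absurd ⟨hx, h ▸ hw⟩ hnotboth
          calc degN H u ≤ ({x} : Set V).ncard :=
                Set.ncard_le_ncard hsub (Set.toFinite _)
            _ = 1 := Set.ncard_singleton x
        · have hsub : H.neighborSet u ⊆ {y} := by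
            intro w hw
            rcases hNsub hw with h | h
            · exact absurd (h ▸ hw) hx
            · exact h
          calc degN H u ≤ ({y} : Set V).ncard :=
                Set.ncard_le_ncard hsub (Set.toFinite _)
            _ = 1 := Set.ncard_singleton y
      have := hdegH_pos u
      omega
    have htk : t = k - 1 := by
      have := hdegH_ge u
      omega
    -- the common contradiction
    have claim : ∀ p q : V, H.Adj u p → H.Adj p q → u ≠ q →
        degN H p + degN H q = degN H x + degN H y → False := by
      intro p q hup hpq huq hsum
      have l1 := xi1_le_pair hup
      have ld1 := dOut_pair hup
      have ld0 := dOut_pair hxy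
      have hq1 : degN H q = 1 := by
        have := hdegH_pos q
        omega
      have hfq : {e ∈ F | q ∈ e}.ncard = t := by
        have := hfv q
        omega
      have hfu : {e ∈ F | u ∈ e}.ncard = t := by
        have := hfv u
        omega
      have hqe : {e ∈ F | q ∈ e} = F :=
        Set.eq_of_subset_of_ncard_le (Set.sep_subset _ _) (by omega) (Set.toFinite _)
      have hue : {e ∈ F | u ∈ e} = F :=
        Set.eq_of_subset_of_ncard_le (Set.sep_subset _ _) (by omega) (Set.toFinite _)
      have hsing : F ⊆ {s(u, q)} := by
        intro e he
        have h1 : q ∈ e := by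
          have hh : e ∈ {e ∈ F | q ∈ e} := by rw [hqe]; exact he
          exact hh.2
        have h2 : u ∈ e := by
          have hh : e ∈ {e ∈ F | u ∈ e} := by rw [hue]; exact he
          exact hh.2
        exact Set.mem_singleton_iff.mpr (sym2_eq_of_mems h2 h1 huq)
      have hle1 : t ≤ 1 :=
        le_trans (Set.ncard_le_ncard hsing (Set.toFinite _)) (by simp)
      omega
    obtain ⟨w0, hw0⟩ := hnb u
    rcases hNsub hw0 with h | h
    · -- w0 = x
      have hux : H.Adj u x := h ▸ hw0
      have huy : u ≠ y := fun hh => hu (by rw [hh]; simp)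
      exact claim x y hux hxy huy rfl
    · -- w0 = y
      have huy : H.Adj u y := h ▸ hw0
      have hux : u ≠ x := fun hh => hu (by rw [hh]; simp)
      exact claim y x huy hxy.symm hux (by omega)
  have hnotall : ∃ u, u ∉ ({x, y} : Set V) := exists_not_mem_pair (by omega)
  have hcut0 : IsExtraEdgeCut H 1 (bdry H {x, y}) := pair_cut hxy hout hnotall
  have hcut0c : (bdry H {x, y}).ncard = xiH H 1 := by
    rw [← dOut_def']
    exact hX0d
  -- lower bound for all cuts
  have hlow : ∀ F' : Set (Sym2 V), IsExtraEdgeCut H 1 F' → xiH H 1 ≤ F'.ncard := by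
    intro F' hcut
    rcases cut_cases hcut with ⟨x', y', hadj', hbd', -⟩ | hall
    · have h1 := xi1_le_pair hadj'
      have h2 := Set.ncard_le_ncard hbd' (Set.toFinite _)
      rw [dOut_def'] at h1
      omega
    · have hcut2 := lift_cut hF hcut hall
      have h34 := hl2 _ hcut2
      have hdisj : Disjoint F F' := disjoint_of_subset_H hcut.1
      have huni : (F ∪ F').ncard = t + F'.ncard :=
        Set.ncard_union_eq hdisj (Set.toFinite _) (Set.toFinite _)
      rcases Nat.eq_zero_or_pos t with h0 | h1
      · omega
      · have := hxiH_le3 h1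
        omega
  have hlamSet : lambdaH H 1 = sInf {m | ∃ F' : Set (Sym2 V),
      IsExtraEdgeCut H 1 F' ∧ F'.ncard = m} := rfl
  have hlam : lambdaH H 1 = xiH H 1 := by
    refine le_antisymm ?_ ?_
    · have := lambdaH_le hcut0
      omega
    · rw [hlamSet]
      refine le_csInf ⟨(bdry H {x, y}).ncard, _, hcut0, rfl⟩ ?_
      rintro b ⟨F', h1, rfl⟩
      exact hlow F' h1
  refine ⟨hHconn, ⟨_, hcut0⟩, hlam, ?_⟩
  intro F' hcut hminc
  rcases cut_cases hcut with ⟨x', y', hadj', hbd', c, hsupp⟩ | hall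
  · exact ⟨c, by rw [hsupp]; exact Set.ncard_pair (H.ne_of_adj hadj')⟩
  · exfalso
    have hcut2 := lift_cut hF hcut hall
    have h34 := hl2 _ hcut2
    have hdisj : Disjoint F F' := disjoint_of_subset_H hcut.1
    have huni : (F ∪ F').ncard = t + F'.ncard :=
      Set.ncard_union_eq hdisj (Set.toFinite _) (Set.toFinite _)
    have hFeq : F'.ncard = xiH H 1 := by rw [hminc, hlam]
    rcases Nat.eq_zero_or_pos t with h0 | h1
    · omega
    have hxile3 := hxiH_le3 h1
    have htk : t = k - 1 := by omega
    have hxieq : xiH H 1 = 2 * k - 3 := by omega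
    have hunieq : (F ∪ F').ncard = 3 * k - 4 := by omega
    have hmin2 : (F ∪ F').ncard = lambdaH G 2 := by rw [hopt2, hxi2, hunieq]
    obtain ⟨c, hc3⟩ := hsuper2 (F ∪ F') hcut2 hmin2
    have hXconn : (G.induce c.supp).Connected :=
      supp_induce_connected (SimpleGraph.deleteEdges_le _) c
    obtain ⟨p, q, r, hpq, hpr, hqr, hXeq⟩ := Set.ncard_eq_three.mp hc3
    rw [hXeq] at hXconn
    obtain ⟨a, b, cc, habc_eq, hacne, hab, hbc, hnac⟩ :=
      path_of_triple_connected htf hpq hqr hpr hXconn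
    have hbdsub : bdry G {a, b, cc} ⊆ F ∪ F' := by
      have h0 := bdry_subset_cut c
      rw [hXeq, habc_eq] at h0
      exact h0
    have hd3 := dOut_triple hab hbc hnac hacne
    rw [hreg, hreg, hreg] at hd3
    have hbdeq : F ∪ F' = bdry G {a, b, cc} := by
      refine (Set.eq_of_subset_of_ncard_le hbdsub ?_ (Set.toFinite _)).symm
      rw [← dOut_def']
      omega
    have hFsub : F ⊆ bdry G {a, b, cc} := hbdeq ▸ Set.subset_union_left
    have hsum := f_sum_three (G.ne_of_adj hab) (G.ne_of_adj hbc) hacne hFsub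
    have hsab : s(a, b) ∉ F := fun hmem =>
      not_mem_bdry_of_both (by simp) (by simp) (hFsub hmem)
    have hsbc : s(b, cc) ∉ F := fun hmem =>
      not_mem_bdry_of_both (X := {a, b, cc}) (by simp) (by simp) (hFsub hmem)
    have hHab : H.Adj a b := SimpleGraph.deleteEdges_adj.mpr ⟨hab, hsab⟩
    have hHbc : H.Adj b cc := SimpleGraph.deleteEdges_adj.mpr ⟨hbc, hsbc⟩
    have l1 := xi1_le_pair hHab
    have l1' := dOut_pair hHab
    have l2 := xi1_le_pair hHbc
    have l2' := dOut_pair hHbc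
    have e1 := hfv a; have e2 := hfv b; have e3 := hfv cc
    omega

end Key
/-- A `k`-regular super-`λ''` graph with `k ≥ 4` and girth at least `4` is super-`λ'`
and satisfies `ρ'(G) = k - 1`. -/
theorem stmt14 {V : Type*} [Fintype V] (G : SimpleGraph V) (k : ℕ) (hk : 4 ≤ k)
    (hreg : ∀ v, degN G v = k) (hs : SuperLambda G 2) (hg : (4 : ℕ∞) ≤ G.egirth) :
    SuperLambda G 1 ∧ rhoH G 1 = k - 1 := by
  classical
  have htf : ∀ ⦃a b c : V⦄, G.Adj a b → G.Adj b c → a ≠ c → ¬ G.Adj a c :=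
    fun a b c h1 h2 h3 => tri_free hg h1 h2 h3
  have h1 : SuperLambda G 1 := by
    have h := key hk hreg hs htf (F := ∅) (Set.empty_subset _) (by simp)
    rwa [SimpleGraph.deleteEdges_empty] at h
  refine ⟨h1, ?_⟩
  obtain ⟨v0⟩ : Nonempty V := hs.1.nonempty
  have hSset : {m : ℕ | ∀ F : Set (Sym2 V), F ⊆ G.edgeSet → F.ncard ≤ m →
      SuperLambda (G.deleteEdges F) 1} = Set.Iic (k - 1) := by
    ext m
    simp only [Set.mem_setOf_eq, Set.mem_Iic]
    constructor
    · intro hm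
      by_contra hc
      push_neg at hc
      set Fv : Set (Sym2 V) := {e ∈ G.edgeSet | v0 ∈ e} with hFv
      have hFvsub : Fv ⊆ G.edgeSet := Set.sep_subset _ _
      have hFveq : {e ∈ Fv | v0 ∈ e} = Fv := by
        ext e
        exact ⟨fun h => h.1, fun h => ⟨h, h.2⟩⟩
      have hdeg0 : degN (G.deleteEdges Fv) v0 = 0 := by
        show ((G.deleteEdges Fv).neighborSet v0).ncard = 0
        rw [Set.ncard_eq_zero (Set.toFinite _)]
        ext w
        simp only [SimpleGraph.mem_neighborSet, Set.mem_empty_iff_false, iff_false]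
        intro hadj
        exact (SimpleGraph.deleteEdges_adj.mp hadj).2
          ⟨G.mem_edgeSet.mpr (SimpleGraph.deleteEdges_adj.mp hadj).1, Sym2.mem_mk_left _ _⟩
      have hFvc : Fv.ncard = k := by
        have h2 := degN_deleteEdges hFvsub v0
        rw [hreg, hFveq, hdeg0] at h2
        omega
      have hsl := hm Fv hFvsub (by omega)
      have hconn := hsl.1
      -- but v0 is isolated and there is another vertex
      have hcard : k + 1 ≤ (Set.univ : Set V).ncard := card_univ_ge hreg v0
      obtain ⟨a, -, b, -, habne⟩ := (Set.one_lt_ncard (Set.toFinite _)).mp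
        (show 1 < (Set.univ : Set V).ncard by omega)
      have hune : ∃ u : V, u ≠ v0 := by
        by_cases hav : a = v0
        · exact ⟨b, fun hb => habne (by rw [hav, hb])⟩
        · exact ⟨a, hav⟩
      obtain ⟨u, hu⟩ := hune
      obtain ⟨p⟩ := hconn.preconnected v0 u
      cases p with
      | nil => exact hu rfl
      | cons hadj p =>
        exact (SimpleGraph.deleteEdges_adj.mp hadj).2
          ⟨G.mem_edgeSet.mpr (SimpleGraph.deleteEdges_adj.mp hadj).1, Sym2.mem_mk_left _ _⟩
    · intro hm F hFsub hFc
      exact key hk hreg hs htf hFsub (le_trans hFc hm)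
  have hrho : rhoH G 1 = sSup {m : ℕ | ∀ F : Set (Sym2 V), F ⊆ G.edgeSet → F.ncard ≤ m →
      SuperLambda (G.deleteEdges F) 1} := rfl
  rw [hrho, hSset, csSup_Iic]
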